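/- Let U ∈ C³([0,∞)) with U(0) = 0, U'(0) = 1, U(Y) > 0 for Y > 0, and U''(Y) - 1 = O(Y²) as Y → 0; set D := L_U^{-1}(U'' - 1). For W ∈ C²([0,∞)) with W(Y) = O(Y²) as Y → 0, define C[W] := -∂_Y( D·∫_0^Y W/U² ) + 2·∂_Y( U·∫_0^Y (W·D)/U³ ). Then C[W] = 2·L_U^{-1}( (D/U)·W ) - ∂_Y( (D/U)·∫_0^Y L_U^{-1}W ). -/

import Mathlib

open Set MeasureTheory Filter Asymptotics
open scoped Topology

/-- The operator `L_U^{-1}`, defined by `(L_U^{-1} f)(Y) = d/dY (U(Y)·∫_0^Y f/U²)`. -/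
noncomputable def LUinv (U f : ℝ → ℝ) : ℝ → ℝ :=
  deriv fun Z => U Z * ∫ z in (0:ℝ)..Z, f z / (U z) ^ 2

private lemma aux_II {f : ℝ → ℝ} (hf : ContinuousOn f (Ioi 0))
    {C δ : ℝ} (hδ : 0 < δ) (hb : ∀ x ∈ Ioc (0:ℝ) δ, |f x| ≤ C)
    {Z : ℝ} (hZ : 0 < Z) : IntervalIntegrable f volume 0 Z := by
  have hm0 : 0 < min δ Z := lt_min hδ hZ
  have h1 : IntervalIntegrable f volume 0 (min δ Z) := by
    rw [intervalIntegrable_iff_integrableOn_Ioc_of_le hm0.le]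
    refine ⟨(hf.mono (fun x hx => hx.1)).aestronglyMeasurable measurableSet_Ioc,
      HasFiniteIntegral.restrict_of_bounded (C := C) measure_Ioc_lt_top ?_⟩
    filter_upwards [ae_restrict_mem measurableSet_Ioc] with x hx
    simpa using hb x ⟨hx.1, hx.2.trans (min_le_left _ _)⟩
  have h2 : IntervalIntegrable f volume (min δ Z) Z := by
    apply ContinuousOn.intervalIntegrable
    apply hf.mono
    rw [uIcc_of_le (min_le_right _ _)]
    exact fun x hx => lt_of_lt_of_le hm0 hx.1
  exact h1.trans h2

private lemma ftc_aux (U W : ℝ → ℝ) (hU : ContDiffOn ℝ 3 U (Ici 0))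
    (hU0 : U 0 = 0) (hU1 : derivWithin U (Ici 0) 0 = 1)
    (hUpos : ∀ Y > (0:ℝ), 0 < U Y)
    (hW : ContDiffOn ℝ 2 W (Ici 0))
    (hWO : W =O[nhdsWithin 0 (Ioi 0)] fun Y => Y ^ 2) :
    ∀ Z > (0:ℝ), (∫ z in (0:ℝ)..Z, LUinv U W z)
      = U Z * ∫ z in (0:ℝ)..Z, W z / (U z) ^ 2 := by
  intro Z hZ
  set h : ℝ → ℝ := fun z => W z / (U z) ^ 2 with hh
  set IW : ℝ → ℝ := fun x => ∫ z in (0:ℝ)..x, h z with hIWdef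
  set F : ℝ → ℝ := fun x => U x * IW x with hFdef
  have hIci : ∀ x : ℝ, 0 < x → Ici (0:ℝ) ∈ 𝓝 x := fun x hx =>
    mem_of_superset (isOpen_Ioi.mem_nhds hx) Ioi_subset_Ici_self
  have hUda : ∀ x : ℝ, 0 < x → DifferentiableAt ℝ U x := fun x hx =>
    (hU.contDiffAt (hIci x hx)).differentiableAt (by norm_num)
  have hUne : ∀ x : ℝ, 0 < x → U x ≠ 0 := fun x hx => (hUpos x hx).ne'
  have hUcont : ContinuousOn U (Ioi 0) := hU.continuousOn.mono Ioi_subset_Ici_self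
  have hWcont : ContinuousOn W (Ioi 0) := hW.continuousOn.mono Ioi_subset_Ici_self
  have hhc : ContinuousOn h (Ioi 0) :=
    hWcont.div (hUcont.pow 2) (fun x hx => pow_ne_zero _ (hUne x hx))
  -- bounds near zero
  obtain ⟨C0, hC0⟩ := hWO.bound
  set C := max C0 0 with hC
  have hCnn : 0 ≤ C := le_max_right _ _
  have hWb : ∀ᶠ x in 𝓝[>] (0:ℝ), |W x| ≤ C * x ^ 2 := by
    filter_upwards [hC0] with x hx
    calc |W x| ≤ C0 * ‖x ^ 2‖ := by simpa using hx
      _ ≤ C * x ^ 2 := by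
        rw [Real.norm_eq_abs, abs_of_nonneg (sq_nonneg x)]
        exact mul_le_mul_of_nonneg_right (le_max_left _ _) (sq_nonneg x)
  have hUlb : ∀ᶠ x in 𝓝[>] (0:ℝ), x / 2 ≤ U x := by
    have hd : HasDerivWithinAt U 1 (Ici 0) 0 := by
      have := (hU.differentiableOn (by norm_num)) 0 self_mem_Ici
      rw [← hU1]; exact this.hasDerivWithinAt
    have hslope := hasDerivWithinAt_iff_tendsto_slope.mp hd
    have hmono : 𝓝[>] (0:ℝ) ≤ 𝓝[Ici 0 \ {0}] 0 :=
      nhdsWithin_mono _ (fun x hx => ⟨mem_Ici.mpr (le_of_lt (mem_Ioi.mp hx)), ne_of_gt (mem_Ioi.mp hx)⟩)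
    have hev := (hslope.mono_left hmono).eventually
      (eventually_gt_nhds (by norm_num : (1:ℝ)/2 < 1))
    filter_upwards [hev, self_mem_nhdsWithin] with x hx hx0
    have hx0' : (0:ℝ) < x := hx0
    have h1 : (1:ℝ)/2 < U x / x := by
      have : slope U 0 x = U x / x := by
        rw [slope_def_field]; rw [hU0]; ring_nf
      rwa [this] at hx
    rw [lt_div_iff₀ hx0'] at h1
    linarith
  have hhb : ∀ᶠ x in 𝓝[>] (0:ℝ), |h x| ≤ 4 * C := by
    filter_upwards [hWb, hUlb, self_mem_nhdsWithin] with x hW2 hU2 hx0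
    have hx0' : (0:ℝ) < x := hx0
    have hU2' : 0 < U x := lt_of_lt_of_le (by positivity) hU2
    have hpow : x ^ 2 / 4 ≤ U x ^ 2 := by
      have h4 := pow_le_pow_left₀ (by positivity : (0:ℝ) ≤ x/2) hU2 2
      calc x ^ 2 / 4 = (x/2) ^ 2 := by ring
        _ ≤ U x ^ 2 := h4
    have habs : |h x| = |W x| / U x ^ 2 := by
      rw [hh]
      rw [abs_div, abs_of_nonneg (sq_nonneg (U x))]
    rw [habs]
    calc |W x| / U x ^ 2 ≤ (C * x ^ 2) / (x ^ 2 / 4) :=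
          div_le_div₀ (by positivity) hW2 (by positivity) hpow
      _ = 4 * C := by field_simp
  obtain ⟨δ, hδ0, hδsub⟩ := mem_nhdsGT_iff_exists_Ioc_subset.mp hhb
  have hδ0' : (0:ℝ) < δ := hδ0
  have hbIoc : ∀ x ∈ Ioc (0:ℝ) δ, |h x| ≤ 4 * C := fun x hx => hδsub hx
  have hint : ∀ x : ℝ, 0 < x → IntervalIntegrable h volume 0 x :=
    fun x hx => aux_II hhc hδ0' hbIoc hx
  have hIWd : ∀ x : ℝ, 0 < x → HasDerivAt IW (h x) x := fun x hx =>
    intervalIntegral.integral_hasDerivAt_right (hint x hx)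
      (hhc.stronglyMeasurableAtFilter isOpen_Ioi x hx)
      (hhc.continuousAt (isOpen_Ioi.mem_nhds hx))
  have hFd : ∀ x : ℝ, 0 < x → HasDerivAt F (deriv U x * IW x + W x / U x) x := by
    intro x hx
    have h1 := ((hUda x hx).hasDerivAt.mul (hIWd x hx))
    have h2 : deriv U x * IW x + U x * h x = deriv U x * IW x + W x / U x := by
      rw [hh]
      congr 1
      rw [eq_div_iff (hUne x hx)]
      field_simp [hUne x hx]
    rw [← h2]; exact h1
  have hdF : ∀ x : ℝ, 0 < x → deriv F x = deriv U x * IW x + W x / U x :=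
    fun x hx => (hFd x hx).deriv
  have hIWb : ∀ x ∈ Ioc (0:ℝ) δ, |IW x| ≤ 4 * C * δ := by
    intro x hx
    have hb' : ∀ t ∈ Set.uIoc (0:ℝ) x, ‖h t‖ ≤ 4 * C := by
      intro t ht
      rw [uIoc_of_le hx.1.le] at ht
      simpa using hbIoc t ⟨ht.1, ht.2.trans hx.2⟩
    have := intervalIntegral.norm_integral_le_of_norm_le_const hb'
    calc |IW x| ≤ 4 * C * |x - 0| := by simpa using this
      _ ≤ 4 * C * δ := by
          rw [sub_zero, abs_of_pos hx.1]
          exact mul_le_mul_of_nonneg_left hx.2 (by positivity)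
  have hdUb : ∀ᶠ x in 𝓝[>] (0:ℝ), |deriv U x| ≤ 2 := by
    have hcontd : ContinuousOn (derivWithin U (Ici 0)) (Ici 0) :=
      hU.continuousOn_derivWithin (uniqueDiffOn_Ici 0) (by norm_num)
    have ht : Tendsto (derivWithin U (Ici 0)) (𝓝[Ici 0] 0) (𝓝 1) := by
      have hc := hcontd 0 self_mem_Ici
      rw [ContinuousWithinAt, hU1] at hc; exact hc
    have ht' := (ht.mono_left (nhdsWithin_mono _ Ioi_subset_Ici_self)).abs
    filter_upwards [ht'.eventually (eventually_lt_nhds (by norm_num : |(1:ℝ)| < 2)),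
      self_mem_nhdsWithin] with x hx hx0
    rw [← derivWithin_of_mem_nhds (hIci x hx0)]
    exact hx.le
  have hdFb : ∀ᶠ x in 𝓝[>] (0:ℝ), |deriv F x| ≤ 2 * (4 * C * δ) + 2 * C * δ := by
    filter_upwards [hdUb, hWb, hUlb, Ioc_mem_nhdsGT_of_mem ⟨le_refl (0:ℝ), hδ0'⟩]
      with x h1 h2 h3 h4
    have hx0 : 0 < x := h4.1
    have hU0' : 0 < U x := lt_of_lt_of_le (by positivity) h3
    have hWU : |W x / U x| ≤ 2 * C * δ := by
      rw [abs_div, abs_of_pos hU0']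
      calc |W x| / U x ≤ (C * x ^ 2) / (x / 2) :=
            div_le_div₀ (by positivity) h2 (by positivity) h3
        _ = 2 * C * x := by field_simp
        _ ≤ 2 * C * δ := by nlinarith [h4.2]
    rw [hdF x hx0]
    have hIWx := hIWb x h4
    calc |deriv U x * IW x + W x / U x| ≤ |deriv U x| * |IW x| + |W x / U x| := by
          calc |deriv U x * IW x + W x / U x|
              ≤ |deriv U x * IW x| + |W x / U x| := abs_add_le _ _
            _ = |deriv U x| * |IW x| + |W x / U x| := by rw [abs_mul]
      _ ≤ 2 * (4 * C * δ) + 2 * C * δ := by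
          have hn1 : (0:ℝ) ≤ |IW x| := abs_nonneg _
          have hn2 : (0:ℝ) ≤ |deriv U x| := abs_nonneg _
          nlinarith
  obtain ⟨δ', hδ'0, hδ'sub⟩ := mem_nhdsGT_iff_exists_Ioc_subset.mp hdFb
  have hδ'0' : (0:ℝ) < δ' := hδ'0
  have hIWc : ContinuousOn IW (Ioi 0) := fun x hx =>
    ((hIWd x hx).differentiableAt.continuousAt).continuousWithinAt
  have hdUc : ContinuousOn (deriv U) (Ioi 0) :=
    (hU.mono Ioi_subset_Ici_self).continuousOn_deriv_of_isOpen isOpen_Ioi (by norm_num)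
  have hGc : ContinuousOn (fun x => deriv U x * IW x + W x / U x) (Ioi 0) :=
    (hdUc.mul hIWc).add (hWcont.div hUcont (fun x hx => hUne x hx))
  have hdFc : ContinuousOn (deriv F) (Ioi 0) :=
    hGc.congr (fun x hx => hdF x hx)
  have hFc : ContinuousOn F (Icc 0 Z) := by
    intro x hx
    rcases eq_or_lt_of_le hx.1 with h0 | h0
    · rw [← h0]
      have hF0 : F 0 = 0 := by simp [hFdef, hU0]
      rw [ContinuousWithinAt, hF0]
      have hUt : Tendsto (fun x => |U x| * (4 * C * δ)) (𝓝[Icc 0 Z] 0) (𝓝 0) := by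
        have hUc0 : ContinuousWithinAt U (Icc 0 Z) 0 :=
          (hU.continuousOn.mono (Icc_subset_Ici_self)) 0 (left_mem_Icc.mpr hZ.le)
        have := (hUc0.tendsto.abs).mul_const (4 * C * δ)
        simpa [hU0] using this
      apply squeeze_zero_norm' ?_ hUt
      have hev : ∀ᶠ x in 𝓝[Icc 0 Z] (0:ℝ), x < δ :=
        eventually_nhdsWithin_of_eventually_nhds (eventually_lt_nhds hδ0')
      filter_upwards [hev, self_mem_nhdsWithin] with x hxδ hxI
      rcases eq_or_lt_of_le hxI.1 with h1 | h1
      · rw [← h1]; simp [hFdef, hU0]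
      · have hIWx := hIWb x ⟨h1, hxδ.le⟩
        have : ‖F x‖ = |U x| * |IW x| := by
          rw [hFdef]; simp [abs_mul]
        rw [this]
        exact mul_le_mul_of_nonneg_left hIWx (abs_nonneg _)
    · exact ((hFd x h0).differentiableAt.continuousAt).continuousWithinAt
  have key := intervalIntegral.integral_eq_sub_of_hasDeriv_right_of_le hZ.le hFc
    (fun x hx => by rw [hdF x hx.1]; exact (hFd x hx.1).hasDerivWithinAt)
    (aux_II hdFc hδ'0' (fun x hx => hδ'sub hx) hZ)
  have hLU : LUinv U W = deriv F := rfl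
  rw [hLU, key]
  simp [hFdef, hIWdef, hh, hU0]

/-- Alternative formula for the commutator operator
`C[W] = -∂_Y(D·∫_0^Y W/U²) + 2∂_Y(U·∫_0^Y WD/U³)`, where `D = L_U^{-1}(U''-1)`. -/
theorem commutator_formula
    (U : ℝ → ℝ) (hU : ContDiffOn ℝ 3 U (Ici 0))
    (hU0 : U 0 = 0) (hU1 : derivWithin U (Ici 0) 0 = 1)
    (hUpos : ∀ Y > (0:ℝ), 0 < U Y)
    (hUYY : (fun Y => iteratedDeriv 2 U Y - 1) =O[nhdsWithin 0 (Ioi 0)] fun Y => Y ^ 2)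
    (W : ℝ → ℝ) (hW : ContDiffOn ℝ 2 W (Ici 0))
    (hWO : W =O[nhdsWithin 0 (Ioi 0)] fun Y => Y ^ 2) :
    ∀ Y > (0:ℝ),
      -deriv (fun Z => LUinv U (fun t => iteratedDeriv 2 U t - 1) Z
          * ∫ z in (0:ℝ)..Z, W z / (U z) ^ 2) Y
        + 2 * deriv (fun Z => U Z
            * ∫ z in (0:ℝ)..Z, W z * LUinv U (fun t => iteratedDeriv 2 U t - 1) z / (U z) ^ 3) Y
      = 2 * LUinv U (fun z => LUinv U (fun t => iteratedDeriv 2 U t - 1) z / U z * W z) Y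
        - deriv (fun Z => LUinv U (fun t => iteratedDeriv 2 U t - 1) Z / U Z
            * ∫ z in (0:ℝ)..Z, LUinv U W z) Y := by
  intro Y hY
  set D := LUinv U (fun t => iteratedDeriv 2 U t - 1) with hD
  have hA : (fun Z => U Z * ∫ z in (0:ℝ)..Z, W z * D z / (U z) ^ 3)
      = fun Z => U Z * ∫ z in (0:ℝ)..Z, (D z / U z * W z) / (U z) ^ 2 := by
    funext Z
    congr 1
    apply intervalIntegral.integral_congr
    intro z _
    rcases eq_or_ne (U z) 0 with h | h
    · simp [h]
    · field_simp
  have hA' : 2 * deriv (fun Z => U Z * ∫ z in (0:ℝ)..Z, W z * D z / (U z) ^ 3) Y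
      = 2 * LUinv U (fun z => D z / U z * W z) Y := by
    rw [hA]; rfl
  have hkey := ftc_aux U W hU hU0 hU1 hUpos hW hWO
  have hB : deriv (fun Z => D Z * ∫ z in (0:ℝ)..Z, W z / (U z) ^ 2) Y
      = deriv (fun Z => D Z / U Z * ∫ z in (0:ℝ)..Z, LUinv U W z) Y := by
    apply Filter.EventuallyEq.deriv_eq
    filter_upwards [isOpen_Ioi.mem_nhds hY] with Z hZ
    rw [hkey Z hZ]
    field_simp [(hUpos Z hZ).ne']
  rw [hB] at *
  linarith [hA', hB]
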